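/- Let g, h : ℤ → G be maps to an additive abelian group with positive periods m and n. Then for every x ∈ ℤ, g(x) − h(x) lies in the subgroup of G generated by {g(r) − h(r) : 0 ≤ r < m + n − gcd(m,n)}. -/

import Mathlib

private lemma per_mul {G : Type*} [AddCommGroup G] (p : ℕ) (f : ℤ → G)
    (hf : ∀ x, f (x + (p : ℤ)) = f x) : ∀ (k : ℤ) (x : ℤ), f (x + k * (p : ℤ)) = f x := by
  intro k
  induction k using Int.induction_on with
  | zero => simp
  | succ i ih =>
    intro x
    rw [show x + ((i : ℤ) + 1) * p = (x + (i : ℤ) * p) + p by ring, hf, ih]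
  | pred i ih =>
    intro x
    rw [show x + (-(i : ℤ) - 1) * p = (x - p) + (-(i : ℤ)) * p by ring, ih]
    have h2 := hf (x - p)
    rw [show x - (p : ℤ) + p = x by ring] at h2
    rw [h2]

theorem stmt_7 {G : Type*} [AddCommGroup G] (m n : ℕ) (hm : 0 < m) (hn : 0 < n)
    (g h : ℤ → G) (hg : ∀ x, g (x + m) = g x) (hh : ∀ x, h (x + n) = h x) :
    ∀ x : ℤ, g x - h x ∈
      AddSubgroup.closure {d : G | ∃ r : ℕ, r < m + n - Nat.gcd m n ∧ d = g r - h r} := by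
  intro x₀
  have hdpos : 0 < Nat.gcd m n := Nat.gcd_pos_of_pos_left n hm
  set d : ℕ := Nat.gcd m n with hd
  have hdvm : d ∣ m := Nat.gcd_dvd_left m n
  have hdvn : d ∣ n := Nat.gcd_dvd_right m n
  have hdm : d ≤ m := Nat.le_of_dvd hm hdvm
  have hdn : d ≤ n := Nat.le_of_dvd hn hdvn
  obtain ⟨N, hNpos, hNdn⟩ : ∃ N : ℕ, 0 < N ∧ N * d = n :=
    ⟨n / d, Nat.div_pos hdn hdpos, Nat.div_mul_cancel hdvn⟩
  set C : AddSubgroup G :=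
    AddSubgroup.closure {x : G | ∃ r : ℕ, r < m + n - d ∧ x = g r - h r} with hCdef
  set π : G →+ G ⧸ C := QuotientAddGroup.mk' C with hπ
  set F : ℤ → G ⧸ C := fun x => π (g x - h x) with hFdef
  suffices hkey : ∀ x : ℤ, F x = 0 by
    have hx := hkey x₀
    simp only [hFdef] at hx
    exact (QuotientAddGroup.eq_zero_iff _).mp hx
  -- values in the window are zero
  have hF0 : ∀ x : ℤ, 0 ≤ x → x < (m : ℤ) + n - d → F x = 0 := by
    intro x hx0 hxL
    obtain ⟨r, rfl⟩ := Int.eq_ofNat_of_zero_le hx0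
    have hr : r < m + n - d := by omega
    simp only [hFdef]
    apply (QuotientAddGroup.eq_zero_iff _).mpr
    rw [hCdef]
    exact AddSubgroup.subset_closure ⟨r, hr, rfl⟩
  -- difference formulas
  have hdiffm : ∀ x : ℤ, F (x + m) - F x = π (h x - h (x + m)) := by
    intro x
    simp only [hFdef]
    rw [← map_sub, hg x]
    congr 1
    abel
  have hdiffn : ∀ x : ℤ, F (x + n) - F x = π (g (x + n) - g x) := by
    intro x
    simp only [hFdef]
    rw [← map_sub, hh x]
    congr 1
    abel
  -- congruence steps
  have hAm : ∀ x k : ℤ, F (x + k * n + m) - F (x + k * n) = F (x + m) - F x := by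
    intro x k
    rw [hdiffm, hdiffm]
    have e1 : h (x + k * n) = h x := per_mul n h hh k x
    have e2 : h (x + k * n + m) = h (x + m) := by
      rw [show x + k * (n : ℤ) + m = (x + m) + k * n by ring]
      exact per_mul n h hh k (x + m)
    rw [e1, e2]
  have hAn : ∀ x k : ℤ, F (x + k * m + n) - F (x + k * m) = F (x + n) - F x := by
    intro x k
    rw [hdiffn, hdiffn]
    have e1 : g (x + k * m) = g x := per_mul m g hg k x
    have e2 : g (x + k * m + n) = g (x + n) := by
      rw [show x + k * (m : ℤ) + n = (x + n) + k * m by ring]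
      exact per_mul m g hg k (x + n)
    rw [e1, e2]
  -- sum over a coset of d is invariant under shifting by d
  have hNc : ((N : ℤ)) * d = n := by exact_mod_cast hNdn
  have hbase : ∀ t : ℤ,
      (∑ k ∈ Finset.range N, h (t + ((k : ℤ) + 1) * d)) =
        ∑ k ∈ Finset.range N, h (t + (k : ℤ) * d) := by
    intro t
    have e2 := Finset.sum_range_succ' (fun k : ℕ => h (t + (k : ℤ) * d)) N
    have e3 := Finset.sum_range_succ (fun k : ℕ => h (t + (k : ℤ) * d)) N
    push_cast at e2 e3
    have e4 : h (t + (N : ℤ) * d) = h (t + (0 : ℤ) * d) := by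
      rw [show t + (N : ℤ) * d = t + (n : ℤ) by rw [← hNc], hh t]
      norm_num
    have e5 := e2.symm.trans e3
    rw [e4] at e5
    exact add_right_cancel e5
  have hiter : ∀ (j : ℕ) (t : ℤ),
      (∑ k ∈ Finset.range N, h (t + (j : ℤ) * d + (k : ℤ) * d)) =
        ∑ k ∈ Finset.range N, h (t + (k : ℤ) * d) := by
    intro j
    induction j with
    | zero => intro t; norm_num
    | succ j ih =>
      intro t
      calc (∑ k ∈ Finset.range N, h (t + ((j : ℕ) + 1 : ℤ) * d + (k : ℤ) * d))
          = ∑ k ∈ Finset.range N, h ((t + d) + (j : ℤ) * d + (k : ℤ) * d) := by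
            apply Finset.sum_congr rfl
            intro k _
            congr 1
            ring
        _ = ∑ k ∈ Finset.range N, h ((t + d) + (k : ℤ) * d) := ih (t + d)
        _ = ∑ k ∈ Finset.range N, h (t + ((k : ℤ) + 1) * d) := by
            apply Finset.sum_congr rfl
            intro k _
            congr 1
            ring
        _ = ∑ k ∈ Finset.range N, h (t + (k : ℤ) * d) := hbase t
  have hsummain : ∀ t : ℤ,
      (∑ k ∈ Finset.range N, (h (t + (k : ℤ) * d) - h (t + (k : ℤ) * d + m))) = 0 := by
    intro t
    rw [Finset.sum_sub_distrib, sub_eq_zero]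
    symm
    have hmd : ((m / d : ℕ) : ℤ) * d = m := by exact_mod_cast Nat.div_mul_cancel hdvm
    calc (∑ k ∈ Finset.range N, h (t + (k : ℤ) * d + m))
        = ∑ k ∈ Finset.range N, h (t + ((m / d : ℕ) : ℤ) * d + (k : ℤ) * d) := by
          apply Finset.sum_congr rfl
          intro k _
          congr 1
          rw [hmd]
          ring
      _ = ∑ k ∈ Finset.range N, h (t + (k : ℤ) * d) := hiter (m / d) t
  -- key: F vanishes at the d extra points
  have hCkey : ∀ t : ℤ, 0 ≤ t → t < (d : ℤ) → F ((m : ℤ) + n - d + t) = 0 := by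
    intro t ht0 htd
    have h0 := congrArg π (hsummain t)
    rw [map_sum, map_zero] at h0
    have h1 : ∀ k ∈ Finset.range N,
        π (h (t + (k : ℤ) * d) - h (t + (k : ℤ) * d + m)) =
          F (t + (k : ℤ) * d + m) - F (t + (k : ℤ) * d) := fun k _ => (hdiffm _).symm
    rw [Finset.sum_congr rfl h1] at h0
    obtain ⟨N', rfl⟩ : ∃ N', N = N' + 1 := ⟨N - 1, by omega⟩
    rw [Finset.sum_range_succ] at h0
    have hNN : ((N' : ℤ)) * d = (n : ℤ) - d := by push_cast at hNc ⊢; linarith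
    have h2 : ∀ k ∈ Finset.range N',
        F (t + (k : ℤ) * d + m) - F (t + (k : ℤ) * d) = 0 := by
      intro k hk
      rw [Finset.mem_range] at hk
      have hk1 : ((k : ℤ) + 1) * d ≤ (N' : ℤ) * d := by
        apply mul_le_mul_of_nonneg_right _ (by positivity)
        exact_mod_cast hk
      rw [show ((k : ℤ) + 1) * d = (k : ℤ) * d + d by ring, hNN] at hk1
      have hkd0 : (0 : ℤ) ≤ (k : ℤ) * d := by positivity
      rw [hF0 _ (by linarith) (by linarith), hF0 _ (by linarith) (by linarith), sub_zero]
    rw [Finset.sum_congr rfl h2, Finset.sum_const_zero, zero_add] at h0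
    have h3 : F (t + (N' : ℤ) * d) = 0 := by
      apply hF0
      · have : (0 : ℤ) ≤ (N' : ℤ) * d := by positivity
        linarith
      · rw [hNN]
        have hdm' : (d : ℤ) ≤ m := by exact_mod_cast hdm
        linarith
    rw [h3, sub_zero] at h0
    rw [show (m : ℤ) + n - d + t = t + (N' : ℤ) * d + m by linear_combination -hNN]
    exact h0
  -- F has period m
  have hPm : ∀ x : ℤ, F (x + m) = F x := by
    intro x
    have hnz : (n : ℤ) ≠ 0 := by exact_mod_cast hn.ne'
    have hi0 : 0 ≤ x % n := Int.emod_nonneg x hnz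
    have hin : x % n < (n : ℤ) := Int.emod_lt_of_pos x (by exact_mod_cast hn)
    have hd1 := hAm (x % n) (x / n)
    rw [Int.emod_add_ediv_mul x n] at hd1
    have hz1 : F (x % n) = 0 := hF0 _ hi0 (by omega)
    have hz2 : F (x % n + m) = 0 := by
      by_cases hc : x % n < (n : ℤ) - d
      · exact hF0 _ (by omega) (by omega)
      · have hck := hCkey (x % n - n + d) (by omega) (by omega)
        rw [show (m : ℤ) + n - d + (x % n - n + d) = x % n + m by ring] at hck
        exact hck
    rw [hz1, hz2, sub_zero] at hd1
    exact sub_eq_zero.mp hd1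
  -- F has period n
  have hPn : ∀ x : ℤ, F (x + n) = F x := by
    intro x
    have hmz : (m : ℤ) ≠ 0 := by exact_mod_cast hm.ne'
    have hi0 : 0 ≤ x % m := Int.emod_nonneg x hmz
    have him : x % m < (m : ℤ) := Int.emod_lt_of_pos x (by exact_mod_cast hm)
    have hd1 := hAn (x % m) (x / m)
    rw [Int.emod_add_ediv_mul x m] at hd1
    have hz1 : F (x % m) = 0 := hF0 _ hi0 (by omega)
    have hz2 : F (x % m + n) = 0 := by
      by_cases hc : x % m < (m : ℤ) - d
      · exact hF0 _ (by omega) (by omega)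
      · have hck := hCkey (x % m - m + d) (by omega) (by omega)
        rw [show (m : ℤ) + n - d + (x % m - m + d) = x % m + n by ring] at hck
        exact hck
    rw [hz1, hz2, sub_zero] at hd1
    exact sub_eq_zero.mp hd1
  -- conclude via Bezout
  intro x
  have hFm := per_mul m F hPm
  have hFn := per_mul n F hPn
  have hbez : (d : ℤ) = m * Int.gcdA m n + n * Int.gcdB m n := by
    have hbz := Int.gcd_eq_gcd_ab (m : ℤ) (n : ℤ)
    rw [Int.gcd_natCast_natCast] at hbz
    exact_mod_cast hbz
  have hdz : (0 : ℤ) < d := by exact_mod_cast hdpos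
  have hr0 : 0 ≤ x % d := Int.emod_nonneg x hdz.ne'
  have hrd : x % d < (d : ℤ) := Int.emod_lt_of_pos x hdz
  have h1 : x % d + x / d * d = x := Int.emod_add_ediv_mul x d
  have hxe : x = (x % d + (x / d * Int.gcdB m n) * n) + (x / d * Int.gcdA m n) * m := by
    linear_combination -h1 + (x / d) * hbez
  have h2 : F x = F (x % d) := by
    conv_lhs => rw [hxe]
    rw [hFm, hFn]
  rw [h2]
  exact hF0 _ hr0 (by omega)
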